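/- Suppose k01, k02, k12, k21, V and a1, a2, a3, a4, a5 are real numbers with V = a5 ≠ 0, (k02 + k12)/V = (a2 + a3)/a5, k01*k02 + k01*k12 + k02*k21 = a1*a2 + a1*a3 + a2*a4, and k01 + k02 + k12 + k21 = a1 + a2 + a3 + a4. Then k01 + k21 = a1 + a4, k02 + k12 = a2 + a3, and k12*k21 = a3*a4. -/
import Mathlib

theorem stmt_1 (k01 k02 k12 k21 V a1 a2 a3 a4 a5 : ℝ)
    (hV : V = a5) (hV0 : V ≠ 0)
    (h1 : (k02 + k12) / V = (a2 + a3) / a5)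
    (h2 : k01 * k02 + k01 * k12 + k02 * k21 = a1 * a2 + a1 * a3 + a2 * a4)
    (h3 : k01 + k02 + k12 + k21 = a1 + a2 + a3 + a4) :
    k01 + k21 = a1 + a4 ∧ k02 + k12 = a2 + a3 ∧ k12 * k21 = a3 * a4 := by
  subst hV
  have he : k02 + k12 = a2 + a3 := by
    field_simp at h1
    linarith
  have hf : k01 + k21 = a1 + a4 := by linarith
  refine ⟨hf, he, ?_⟩
  linear_combination (k21 + k01) * he - h2 + (a2 + a3) * hf
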